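/- A connected graph has a strong orientation (an orientation in which every vertex can reach every other vertex by a directed path) if and only if it has no bridge. -/

import Mathlib

open SimpleGraph

/-- `R` is an orientation of the simple graph `G`: every arc of `R` lies on an edge of `G`,
and every edge of `G` receives exactly one of its two possible directions. -/
def IsOrientation {V : Type*} (G : SimpleGraph V) (R : V → V → Prop) : Prop :=
  (∀ u v, R u v → G.Adj u v) ∧ ∀ u v, G.Adj u v → (R u v ↔ ¬ R v u)

/-- `RelPow R k u v` : there is a directed walk of length `k` from `u` to `v`. -/
def RelPow {V : Type*} (R : V → V → Prop) : ℕ → V → V → Prop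
  | 0, u, v => u = v
  | n + 1, u, v => ∃ w, R u w ∧ RelPow R n w v

/-- The digraph `R` has diameter at most `d`: any vertex can reach any other by a
directed walk of length at most `d`. -/
def DiamLE {V : Type*} (R : V → V → Prop) (d : ℕ) : Prop :=
  ∀ u v, ∃ k ≤ d, RelPow R k u v

/-- A digraph is strongly connected if every vertex can reach every other. -/
def StronglyConnected {V : Type*} (R : V → V → Prop) : Prop :=
  ∀ u v, Relation.ReflTransGen R u v

/-- A graph is bridgeless if it is connected and contains no bridge. -/
def Bridgeless {V : Type*} (G : SimpleGraph V) : Prop :=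
  G.Connected ∧ ∀ e, ¬ G.IsBridge e

/-- The graph `G_{n,d}`: the path `u_1 … u_d` is the set of indices `0,…,d-1`,
the clique `K_{n-d-1}` is the set of indices `d,…,n-2`, both endpoints `0` and `d-1`
of the path are joined to all clique vertices, and the extra vertex `u_3'` is the
index `n-1`, joined to `u_2, u_3, u_4`, i.e. to indices `1, 2, 3`. -/
def Gnd (n d : ℕ) : SimpleGraph (Fin n) :=
  SimpleGraph.fromRel (fun i j =>
    ((i : ℕ) + 1 = (j : ℕ) ∧ (j : ℕ) < d) ∨
    (d ≤ (i : ℕ) ∧ (i : ℕ) < n - 1 ∧ d ≤ (j : ℕ) ∧ (j : ℕ) < n - 1) ∨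
    (((i : ℕ) = 0 ∨ (i : ℕ) = d - 1) ∧ d ≤ (j : ℕ) ∧ (j : ℕ) < n - 1) ∨
    ((i : ℕ) = n - 1 ∧ ((j : ℕ) = 1 ∨ (j : ℕ) = 2 ∨ (j : ℕ) = 3)))

/-- The graph `H_{n,n-2}`: the cycle `u_1 … u_{n-1} u_1` is the set of indices
`0,…,n-2` in cyclic order, and the extra vertex `u_3'` is the index `n-1`,
joined to `u_2, u_3, u_4`, i.e. to indices `1, 2, 3`. -/
def Hgraph (n : ℕ) : SimpleGraph (Fin n) :=
  SimpleGraph.fromRel (fun i j =>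
    ((i : ℕ) + 1 = (j : ℕ) ∧ (j : ℕ) ≤ n - 2) ∨
    ((i : ℕ) = 0 ∧ (j : ℕ) = n - 2) ∨
    ((i : ℕ) = n - 1 ∧ ((j : ℕ) = 1 ∨ (j : ℕ) = 2 ∨ (j : ℕ) = 3)))

section RobbinsAux

open Relation SimpleGraph.Walk

variable {V : Type*}

/-- The support of a partial orientation. -/
private def dsupp (D : V → V → Prop) : Set V := {v | ∃ w, D v w ∨ D w v}

/-- A good partial orientation: arcs lie on edges, each edge is oriented at most once,
and the support is strongly connected. -/
private structure GoodOri (G : SimpleGraph V) (D : V → V → Prop) : Prop where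
  valid : ∀ u v, D u v → G.Adj u v
  antisym : ∀ u v, D u v → ¬ D v u
  strong : ∀ u ∈ dsupp D, ∀ v ∈ dsupp D, Relation.ReflTransGen D u v

private def dcov (D : V → V → Prop) : Set (Sym2 V) := {e | ∃ u v, e = s(u, v) ∧ D u v}

private lemma dcov_mono {D D' : V → V → Prop} (h : ∀ u v, D u v → D' u v) :
    dcov D ⊆ dcov D' := by
  rintro e ⟨u, v, rfl, hd⟩; exact ⟨u, v, rfl, h _ _ hd⟩

private lemma mem_dcov_iff {D : V → V → Prop} {a b : V} :
    s(a, b) ∈ dcov D ↔ D a b ∨ D b a := by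
  constructor
  · rintro ⟨x, y, hxy, hd⟩
    rw [Sym2.eq_iff] at hxy
    rcases hxy with ⟨rfl, rfl⟩ | ⟨rfl, rfl⟩
    · exact Or.inl hd
    · exact Or.inr hd
  · rintro (hd | hd)
    · exact ⟨a, b, rfl, hd⟩
    · exact ⟨b, a, Sym2.eq_swap, hd⟩

private lemma exists_boundary {G : SimpleGraph V} {S : Set V} :
    ∀ {x u : V}, G.Walk x u → x ∉ S → u ∈ S →
      ∃ a b, G.Adj a b ∧ a ∈ S ∧ b ∉ S := by
  intro x u w
  induction w with
  | nil => intro hx hu; exact absurd hu hx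
  | @cons x y u h w ih =>
    intro hx hu
    by_cases hy : y ∈ S
    · exact ⟨y, x, h.symm, hy, hx⟩
    · exact ih hy hu

private lemma exists_firstHit {G : SimpleGraph V} {S : Set V} :
    ∀ {b a : V} (w : G.Walk b a), w.IsPath → b ∉ S → a ∈ S →
      ∃ c, c ∈ S ∧ ∃ p : G.Walk b c, p.IsPath ∧ (∀ x ∈ p.support, x ∈ S → x = c) ∧
        (∀ x ∈ p.support, x ∈ w.support) := by
  intro b a w
  induction w with
  | nil => intro _ hb ha; exact absurd ha hb
  | @cons b y a h w ih =>
    intro hp hb ha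
    by_cases hy : y ∈ S
    · refine ⟨y, hy, SimpleGraph.Walk.cons h .nil, ?_, ?_, ?_⟩
      · simp [SimpleGraph.Walk.isPath_def, h.ne]
      · intro x hx hxS
        simp only [SimpleGraph.Walk.support_cons, SimpleGraph.Walk.support_nil,
          List.mem_cons, List.mem_singleton] at hx
        rcases hx with rfl | hx
        · exact absurd hxS hb
        · simpa using hx
      · intro x hx
        simp only [SimpleGraph.Walk.support_cons, SimpleGraph.Walk.support_nil,
          List.mem_cons, List.mem_singleton] at hx
        simp only [SimpleGraph.Walk.support_cons, List.mem_cons]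
        rcases hx with rfl | hx
        · exact Or.inl rfl
        · simp at hx; subst hx; exact Or.inr w.start_mem_support
    · obtain ⟨c, hc, p, hpp, hfirst, hsub⟩ :=
        ih ((SimpleGraph.Walk.cons_isPath_iff h w).mp hp).1 hy ha
      have hbp : b ∉ p.support := fun hbp =>
        ((SimpleGraph.Walk.cons_isPath_iff h w).mp hp).2 (hsub _ hbp)
      refine ⟨c, hc, SimpleGraph.Walk.cons h p, hpp.cons hbp, ?_, ?_⟩
      · intro x hx hxS
        rw [SimpleGraph.Walk.support_cons, List.mem_cons] at hx
        rcases hx with rfl | hx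
        · exact absurd hxS hb
        · exact hfirst x hx hxS
      · intro x hx
        rw [SimpleGraph.Walk.support_cons, List.mem_cons] at hx
        rw [SimpleGraph.Walk.support_cons, List.mem_cons]
        rcases hx with rfl | hx
        · exact Or.inl rfl
        · exact Or.inr (hsub x hx)

/-- The relation "consecutive on the walk `p`". -/
private def dartRel {G : SimpleGraph V} {b c : V} (p : G.Walk b c) (x y : V) : Prop :=
  ∃ d ∈ p.darts, d.toProd = (x, y)

private lemma dartRel_adj {G : SimpleGraph V} {b c : V} {p : G.Walk b c} {x y : V}
    (h : dartRel p x y) : G.Adj x y := by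
  obtain ⟨⟨⟨df, ds⟩, hadj⟩, _, hd⟩ := h
  simp only [Prod.mk.injEq] at hd
  obtain ⟨rfl, rfl⟩ := hd
  exact hadj

private lemma dartRel_mem_left {G : SimpleGraph V} {b c : V} {p : G.Walk b c} {x y : V}
    (h : dartRel p x y) : x ∈ p.support := by
  obtain ⟨d, hmem, hd⟩ := h
  have := p.dart_fst_mem_support_of_mem_darts hmem
  rwa [show d.fst = x by rw [hd]] at this

private lemma dartRel_mem_right {G : SimpleGraph V} {b c : V} {p : G.Walk b c} {x y : V}
    (h : dartRel p x y) : y ∈ p.support := by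
  obtain ⟨d, hmem, hd⟩ := h
  have := p.dart_snd_mem_support_of_mem_darts hmem
  rwa [show d.snd = y by rw [hd]] at this

private lemma dartRel_antisym {G : SimpleGraph V} {b c : V} {p : G.Walk b c}
    (hp : p.IsTrail) {x y : V} (h1 : dartRel p x y) (h2 : dartRel p y x) : False := by
  obtain ⟨d1, hm1, hd1⟩ := h1
  obtain ⟨d2, hm2, hd2⟩ := h2
  have hne : x ≠ y := (dartRel_adj ⟨d1, hm1, hd1⟩).ne
  have hedge : d1.edge = d2.edge := by
    simp only [SimpleGraph.Dart.edge, hd1, hd2]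
    exact Sym2.eq_swap
  have : d1 = d2 := by
    have hnodup : (p.darts.map SimpleGraph.Dart.edge).Nodup := by
      rw [← SimpleGraph.Walk.edges]; exact hp.edges_nodup
    exact List.inj_on_of_nodup_map hnodup hm1 hm2 hedge
  rw [this, hd2] at hd1
  simp only [Prod.mk.injEq] at hd1
  exact hne (hd1.1.symm ▸ hd1.2.symm ▸ rfl)

private lemma dartRel_cons {G : SimpleGraph V} {b y c : V} (h : G.Adj b y) (p : G.Walk y c)
    {u v : V} (hd : dartRel p u v) : dartRel (SimpleGraph.Walk.cons h p) u v := by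
  obtain ⟨d, hm, hdd⟩ := hd
  exact ⟨d, by rw [SimpleGraph.Walk.darts_cons]; exact List.mem_cons_of_mem _ hm, hdd⟩

private lemma dartRel_reach {G : SimpleGraph V} :
    ∀ {b c : V} (p : G.Walk b c), ∀ x ∈ p.support,
      Relation.ReflTransGen (dartRel p) b x ∧ Relation.ReflTransGen (dartRel p) x c := by
  intro b c p
  induction p with
  | nil =>
    intro x hx
    rw [SimpleGraph.Walk.support_nil, List.mem_singleton] at hx
    subst hx
    exact ⟨.refl, .refl⟩
  | @cons b y c h p ih =>
    intro x hx
    have hstep : dartRel (SimpleGraph.Walk.cons h p) b y :=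
      ⟨⟨(b, y), h⟩, by rw [SimpleGraph.Walk.darts_cons]; exact List.mem_cons_self, rfl⟩
    have hmono : ∀ {u v}, Relation.ReflTransGen (dartRel p) u v →
        Relation.ReflTransGen (dartRel (SimpleGraph.Walk.cons h p)) u v := fun hr =>
      Relation.ReflTransGen.mono (fun _ _ => dartRel_cons h p) _ _ hr
    rw [SimpleGraph.Walk.support_cons, List.mem_cons] at hx
    rcases hx with rfl | hx
    · refine ⟨.refl, ?_⟩
      exact Relation.ReflTransGen.head hstep (hmono (ih y p.start_mem_support).2)
    · obtain ⟨h1, h2⟩ := ih x hx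
      exact ⟨Relation.ReflTransGen.head hstep (hmono h1), hmono h2⟩

/-- Key extension step, hard case: `b` outside the support. -/
private lemma goodOri_extend_aux {G : SimpleGraph V} {D : V → V → Prop} (hD : GoodOri G D)
    {a b c : V} (hab : G.Adj a b) (hnab : ¬ D a b) (hnba : ¬ D b a)
    (haS : a ∈ dsupp D ∨ dsupp D = ∅) (hbS : b ∉ dsupp D)
    (p : (G \ SimpleGraph.fromEdgeSet {s(a, b)}).Walk b c)
    (hpp : p.IsPath)
    (hcS : c ∈ dsupp D ∪ {a})
    (hfirst : ∀ x ∈ p.support, x ∈ dsupp D ∪ {a} → x = c) :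
    GoodOri G (fun u v => D u v ∨ (u = a ∧ v = b) ∨ dartRel p u v) := by
  have hG'le : ∀ {x y}, (G \ SimpleGraph.fromEdgeSet {s(a, b)}).Adj x y → G.Adj x y :=
    fun h => ((SimpleGraph.sdiff_adj _ _ _ _).mp h).1
  have hdart_not_ab : ∀ {x y : V}, dartRel p x y → ¬(x = a ∧ y = b) ∧ ¬(x = b ∧ y = a) := by
    intro x y hxy
    have hadj : (G \ SimpleGraph.fromEdgeSet {s(a, b)}).Adj x y := dartRel_adj hxy
    rw [SimpleGraph.sdiff_adj, SimpleGraph.fromEdgeSet_adj] at hadj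
    constructor
    · rintro ⟨rfl, rfl⟩
      exact hadj.2 ⟨by simp, hab.ne⟩
    · rintro ⟨rfl, rfl⟩
      exact hadj.2 ⟨by rw [Set.mem_singleton_iff]; exact Sym2.eq_swap, hab.ne'⟩
  have hsupp_first : ∀ {x : V}, x ∈ p.support → x ∈ dsupp D → x = c := by
    intro x hx hxd
    exact hfirst x hx (Or.inl hxd)
  have hD'ab : (fun u v => D u v ∨ (u = a ∧ v = b) ∨ dartRel p u v) a b :=
    Or.inr (Or.inl ⟨rfl, rfl⟩)
  constructor
  · rintro u v (h | ⟨rfl, rfl⟩ | h)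
    · exact hD.valid _ _ h
    · exact hab
    · exact hG'le (dartRel_adj h)
  · rintro u v (h | ⟨rfl, rfl⟩ | h) hv
    · rcases hv with h' | ⟨h1, h2⟩ | h'
      · exact hD.antisym _ _ h h'
      · subst h1; subst h2; exact hnba h
      · have hu : u ∈ p.support := dartRel_mem_right h'
        have hv' : v ∈ p.support := dartRel_mem_left h'
        have hud : u ∈ dsupp D := ⟨v, Or.inl h⟩
        have hvd : v ∈ dsupp D := ⟨u, Or.inr h⟩
        exact (hD.valid _ _ h).ne
          ((hsupp_first hu hud).trans (hsupp_first hv' hvd).symm)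
    · rcases hv with h' | ⟨h1, h2⟩ | h'
      · exact hnba h'
      · exact hab.ne h2
      · exact (hdart_not_ab h').2 ⟨rfl, rfl⟩
    · rcases hv with h' | ⟨h1, h2⟩ | h'
      · have hu : u ∈ p.support := dartRel_mem_left h
        have hv' : v ∈ p.support := dartRel_mem_right h
        have hud : u ∈ dsupp D := ⟨v, Or.inr h'⟩
        have hvd : v ∈ dsupp D := ⟨u, Or.inl h'⟩
        exact (hG'le (dartRel_adj h)).ne
          ((hsupp_first hu hud).trans (hsupp_first hv' hvd).symm)
      · subst h1; subst h2; exact (hdart_not_ab h).2 ⟨rfl, rfl⟩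
      · exact dartRel_antisym hpp.isTrail h h'
  · have hmonoD : ∀ {x y : V}, Relation.ReflTransGen D x y →
        Relation.ReflTransGen (fun u v => D u v ∨ (u = a ∧ v = b) ∨ dartRel p u v) x y :=
      fun h => Relation.ReflTransGen.mono (fun u v hd => Or.inl hd) _ _ h
    have hmonop : ∀ {x y : V}, Relation.ReflTransGen (dartRel p) x y →
        Relation.ReflTransGen (fun u v => D u v ∨ (u = a ∧ v = b) ∨ dartRel p u v) x y :=
      fun h => Relation.ReflTransGen.mono (fun u v hd => Or.inr (Or.inr hd)) _ _ h
    have hca : Relation.ReflTransGen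
        (fun u v => D u v ∨ (u = a ∧ v = b) ∨ dartRel p u v) c a := by
      rcases hcS with hc | hc
      · rcases haS with ha | ha
        · exact hmonoD (hD.strong c hc a ha)
        · rw [ha] at hc; exact absurd hc (Set.notMem_empty c)
      · have hca' : c = a := hc
        subst hca'
        exact Relation.ReflTransGen.refl
    have hp_to_a : ∀ x ∈ p.support, Relation.ReflTransGen
        (fun u v => D u v ∨ (u = a ∧ v = b) ∨ dartRel p u v) x a := fun x hx =>
      (hmonop (dartRel_reach p x hx).2).trans hca
    have ha_to_p : ∀ x ∈ p.support, Relation.ReflTransGen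
        (fun u v => D u v ∨ (u = a ∧ v = b) ∨ dartRel p u v) a x := fun x hx =>
      Relation.ReflTransGen.head hD'ab (hmonop (dartRel_reach p x hx).1)
    have hold : ∀ x ∈ dsupp D, Relation.ReflTransGen
          (fun u v => D u v ∨ (u = a ∧ v = b) ∨ dartRel p u v) x a ∧
        Relation.ReflTransGen
          (fun u v => D u v ∨ (u = a ∧ v = b) ∨ dartRel p u v) a x := by
      intro x hx
      rcases haS with ha | ha
      · exact ⟨hmonoD (hD.strong x hx a ha), hmonoD (hD.strong a ha x hx)⟩
      · rw [ha] at hx; exact absurd hx (Set.notMem_empty x)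
    have hsupp' : ∀ x ∈ dsupp (fun u v => D u v ∨ (u = a ∧ v = b) ∨ dartRel p u v),
        Relation.ReflTransGen
          (fun u v => D u v ∨ (u = a ∧ v = b) ∨ dartRel p u v) x a ∧
        Relation.ReflTransGen
          (fun u v => D u v ∨ (u = a ∧ v = b) ∨ dartRel p u v) a x := by
      rintro x ⟨w, hw | hw⟩
      · rcases hw with h | ⟨rfl, rfl⟩ | h
        · exact hold x ⟨w, Or.inl h⟩
        · exact ⟨Relation.ReflTransGen.refl, Relation.ReflTransGen.refl⟩
        · exact ⟨hp_to_a x (dartRel_mem_left h), ha_to_p x (dartRel_mem_left h)⟩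
      · rcases hw with h | ⟨h1, h2⟩ | h
        · exact hold x ⟨w, Or.inr h⟩
        · subst x
          exact ⟨hp_to_a b p.start_mem_support, ha_to_p b p.start_mem_support⟩
        · exact ⟨hp_to_a x (dartRel_mem_right h), ha_to_p x (dartRel_mem_right h)⟩
    intro u hu v hv
    exact (hsupp' u hu).1.trans (hsupp' v hv).2

/-- Key extension step. -/
private lemma goodOri_extend {G : SimpleGraph V} (hB : ∀ e, ¬ G.IsBridge e)
    {D : V → V → Prop} (hD : GoodOri G D) {a b : V} (hab : G.Adj a b)
    (hnab : ¬ D a b) (hnba : ¬ D b a) (haS : a ∈ dsupp D ∨ dsupp D = ∅) :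
    ∃ D', GoodOri G D' ∧ (∀ u v, D u v → D' u v) ∧ D' a b := by
  classical
  by_cases hbS : b ∈ dsupp D
  · -- both endpoints in the support: just add the arc (a, b)
    have haS' : a ∈ dsupp D := by
      rcases haS with h | h
      · exact h
      · rw [h] at hbS; exact absurd hbS (Set.notMem_empty b)
    refine ⟨fun u v => D u v ∨ (u = a ∧ v = b), ?_, fun u v h => Or.inl h, Or.inr ⟨rfl, rfl⟩⟩
    constructor
    · rintro u v (h | ⟨rfl, rfl⟩)
      · exact hD.valid _ _ h
      · exact hab
    · rintro u v (h | ⟨rfl, rfl⟩) (h' | ⟨h1, h2⟩)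
      · exact hD.antisym _ _ h h'
      · subst h1; subst h2; exact hnba h
      · exact hnba h'
      · exact hab.ne h1.symm
    · have hsupp : dsupp (fun u v => D u v ∨ (u = a ∧ v = b)) ⊆ dsupp D := by
        rintro u ⟨w, (h | ⟨rfl, rfl⟩) | (h | ⟨rfl, rfl⟩)⟩
        · exact ⟨w, Or.inl h⟩
        · exact haS'
        · exact ⟨w, Or.inr h⟩
        · exact hbS
      intro u hu v hv
      exact Relation.ReflTransGen.mono (fun x y h => Or.inl h) _ _
        (hD.strong u (hsupp hu) v (hsupp hv))
  · -- b outside the support: route a path from b back to `dsupp D ∪ {a}`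
    have haMem : a ∈ dsupp D ∪ {a} := Or.inr rfl
    have hbMem : b ∉ dsupp D ∪ {a} := by
      rintro (h | h)
      · exact hbS h
      · exact hab.ne' h
    have hreach : (G \ SimpleGraph.fromEdgeSet {s(a, b)}).Reachable b a := by
      have := hB s(a, b)
      rw [SimpleGraph.isBridge_iff] at this
      push_neg at this
      exact this.symm
    obtain ⟨w⟩ := hreach
    obtain ⟨c, hcS, p, hpp, hfirst, -⟩ :=
      exists_firstHit w.bypass w.bypass_isPath hbMem haMem
    exact ⟨fun u v => D u v ∨ (u = a ∧ v = b) ∨ dartRel p u v,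
      goodOri_extend_aux hD hab hnab hnba haS hbS p hpp hcS hfirst,
      fun u v h => Or.inl h, Or.inr (Or.inl ⟨rfl, rfl⟩)⟩

/-- Any good partial orientation of a connected bridgeless graph extends to a total one. -/
private lemma goodOri_total [Fintype V] {G : SimpleGraph V} (hc : G.Connected)
    (hB : ∀ e, ¬ G.IsBridge e) :
    ∃ D : V → V → Prop, GoodOri G D ∧ ∀ u v, G.Adj u v → D u v ∨ D v u := by
  classical
  -- uncovered edges
  let uncov : (V → V → Prop) → Set (Sym2 V) := fun D => G.edgeSet \ dcov D
  suffices H : ∀ (n : ℕ) (D : V → V → Prop), GoodOri G D → (uncov D).ncard ≤ n →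
      ∃ D' : V → V → Prop, GoodOri G D' ∧ ∀ u v, G.Adj u v → D' u v ∨ D' v u by
    exact H (uncov (fun _ _ => False)).ncard (fun _ _ => False)
      ⟨fun u v h => h.elim, fun u v h => h.elim,
        fun u hu => absurd hu.choose_spec (by simp)⟩ le_rfl
  intro n
  induction n with
  | zero =>
    intro D hD hcard
    have hfin : (uncov D).Finite := Set.toFinite _
    have hempty : uncov D = ∅ := by
      rw [← Set.ncard_eq_zero hfin]; omega
    refine ⟨D, hD, fun u v huv => ?_⟩
    have : s(u, v) ∈ dcov D := by
      by_contra h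
      have : s(u, v) ∈ uncov D := ⟨huv, h⟩
      rw [hempty] at this; exact this
    obtain ⟨x, y, hxy, hd⟩ := this
    rw [Sym2.eq_iff] at hxy
    rcases hxy with ⟨rfl, rfl⟩ | ⟨rfl, rfl⟩
    · exact Or.inl hd
    · exact Or.inr hd
  | succ n ih =>
    intro D hD hcard
    by_cases hempty : uncov D = ∅
    · exact ih D hD (by rw [hempty]; simp)
    · obtain ⟨e, he⟩ := Set.nonempty_iff_ne_empty.mpr hempty
      -- find an uncovered edge `{a, b}` with `a` in the support (or support empty)
      obtain ⟨a, b, hab, hnab, hnba, haS⟩ :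
          ∃ a b, G.Adj a b ∧ ¬ D a b ∧ ¬ D b a ∧ (a ∈ dsupp D ∨ dsupp D = ∅) := by
        have hkey : ∀ x y : V, G.Adj x y → s(x, y) ∉ dcov D →
            ∃ a b, G.Adj a b ∧ ¬ D a b ∧ ¬ D b a ∧ (a ∈ dsupp D ∨ dsupp D = ∅) := by
          intro x y hxy hxyc
          have hnxy : ¬ D x y := fun h => hxyc (mem_dcov_iff.mpr (Or.inl h))
          have hnyx : ¬ D y x := fun h => hxyc (mem_dcov_iff.mpr (Or.inr h))
          by_cases hxs : x ∈ dsupp D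
          · exact ⟨x, y, hxy, hnxy, hnyx, Or.inl hxs⟩
          by_cases hys : y ∈ dsupp D
          · exact ⟨y, x, hxy.symm, hnyx, hnxy, Or.inl hys⟩
          by_cases hsupp : dsupp D = ∅
          · exact ⟨x, y, hxy, hnxy, hnyx, Or.inr hsupp⟩
          · obtain ⟨u0, hu0⟩ := Set.nonempty_iff_ne_empty.mpr hsupp
            obtain ⟨w⟩ := hc.preconnected x u0
            obtain ⟨a, b, hab, haS, hbS⟩ := exists_boundary w hxs hu0
            exact ⟨a, b, hab, fun h => hbS ⟨a, Or.inr h⟩, fun h => hbS ⟨a, Or.inl h⟩,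
              Or.inl haS⟩
        have hex : ∃ f : Sym2 V, f ∈ uncov D := ⟨e, he⟩
        rw [Sym2.exists] at hex
        obtain ⟨x, y, hx1, hx2⟩ := hex
        exact hkey x y hx1 hx2
      obtain ⟨D', hD', hle, hD'ab⟩ := goodOri_extend hB hD hab hnab hnba haS
      have hss : uncov D' ⊂ uncov D := by
        constructor
        · rintro f ⟨hf1, hf2⟩
          exact ⟨hf1, fun h => hf2 (dcov_mono hle h)⟩
        · intro hsub
          have h1 : s(a, b) ∈ uncov D :=
            ⟨G.mem_edgeSet.mpr hab, fun h => (mem_dcov_iff.mp h).elim hnab hnba⟩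
          have h2 : s(a, b) ∈ uncov D' := hsub h1
          exact h2.2 ⟨a, b, rfl, hD'ab⟩
      have : (uncov D').ncard < (uncov D).ncard :=
        Set.ncard_lt_ncard hss (Set.toFinite _)
      exact ih D' hD' (by omega)

end RobbinsAux

theorem stmt_0 {V : Type*} [Fintype V] (G : SimpleGraph V) (hc : G.Connected) :
    (∃ R : V → V → Prop, IsOrientation G R ∧ StronglyConnected R) ↔
      ∀ e : Sym2 V, ¬ G.IsBridge e := by
  classical
  constructor
  · rintro ⟨R, ⟨hval, hiff⟩, hstrong⟩ e
    induction e using Sym2.ind with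
    | _ x y =>
    intro hbridge
    rw [SimpleGraph.isBridge_iff] at hbridge
    have hadj : G.Adj x y := (IsBridge.reachable_iff_adj hbridge).mp (hc.preconnected x y)
    have hnreach := hbridge
    have key : ∀ (u v : V), G.Adj u v → R u v →
        ∀ z, Relation.ReflTransGen R z u →
          (G \ SimpleGraph.fromEdgeSet {s(u, v)}).Reachable z u := by
      intro u v huv hR z hz
      refine Relation.ReflTransGen.head_induction_on hz ?_ ?_
      · exact SimpleGraph.Reachable.refl u
      · intro z w hstep _ ih
        by_cases hzu : z = u
        · subst hzu; exact SimpleGraph.Reachable.refl _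
        · have hadj' : (G \ SimpleGraph.fromEdgeSet {s(u, v)}).Adj z w := by
            rw [SimpleGraph.sdiff_adj, SimpleGraph.fromEdgeSet_adj]
            refine ⟨hval _ _ hstep, ?_⟩
            rintro ⟨hedge, -⟩
            rw [Set.mem_singleton_iff, Sym2.eq_iff] at hedge
            rcases hedge with ⟨rfl, rfl⟩ | ⟨rfl, rfl⟩
            · exact hzu rfl
            · exact ((hiff _ _ huv).mp hR) hstep
          exact hadj'.reachable.trans ih
    rcases (em (R x y)).imp id (fun h => ((hiff y x hadj.symm).mpr (by simpa using h))) with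
      hR | hR
    · exact hnreach ((key x y hadj hR y (hstrong y x)).symm)
    · have := key y x hadj.symm hR x (hstrong x y)
      rw [show s(y, x) = s(x, y) from Sym2.eq_swap] at this
      exact hnreach this
  · intro hB
    obtain ⟨D, hD, htotal⟩ := goodOri_total hc hB
    refine ⟨D, ⟨hD.valid, fun u v huv => ?_⟩, ?_⟩
    · constructor
      · exact fun h => hD.antisym _ _ h
      · intro h
        rcases htotal u v huv with h' | h'
        · exact h'
        · exact absurd h' h
    · intro u v
      by_cases huv : u = v
      · subst huv; exact Relation.ReflTransGen.refl
      · have hmem : ∀ {x y : V}, x ≠ y → x ∈ dsupp D := by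
          intro x y hxy
          obtain ⟨w⟩ := hc.preconnected x y
          cases w with
          | nil => exact absurd rfl hxy
          | @cons x z y h q =>
            rcases htotal x z h with h' | h'
            · exact ⟨z, Or.inl h'⟩
            · exact ⟨z, Or.inr h'⟩
        exact hD.strong u (hmem huv) v (hmem (Ne.symm huv))
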